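/- arXiv:2102.06539 — 2 statements merged into one kernel-verified Lean document; each statement's English description precedes it below -/
import Mathlib

section
/- For any square matrix A ∈ ℝ^{d×d}, the absolute value of its determinant is bounded by the product of the Euclidean norms of its columns: |det A| ≤ ∏_{i=1}^d ‖A eᵢ‖, where eᵢ are the standard basis vectors. -/
/-- Hadamard's inequality: the absolute determinant of a real square matrix is bounded by
the product of the Euclidean norms of its columns. -/
theorem abs_det_le_prod_column_norms
    (d : ℕ) (A : Matrix (Fin d) (Fin d) ℝ) :
    |A.det| ≤ ∏ i : Fin d, Real.sqrt (∑ j : Fin d, (A j i) ^ 2) := by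
  haveI : Fact (Module.finrank ℝ (EuclideanSpace ℝ (Fin d)) = d) :=
    ⟨finrank_euclideanSpace_fin⟩
  set b := EuclideanSpace.basisFun (Fin d) ℝ
  set o := b.toBasis.orientation
  set v : Fin d → EuclideanSpace ℝ (Fin d) := fun i => (WithLp.equiv 2 _).symm (fun j => A j i)
  have h1 : |o.volumeForm v| ≤ ∏ i : Fin d, ‖v i‖ := o.abs_volumeForm_apply_le v
  have h2 : o.volumeForm = b.toBasis.det := o.volumeForm_robust b rfl
  have h3 : b.toBasis.det v = A.det := by
    rw [Module.Basis.det_apply]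
    congr 1
  have h4 : ∀ i, ‖v i‖ = Real.sqrt (∑ j : Fin d, (A j i) ^ 2) := by
    intro i
    rw [EuclideanSpace.norm_eq]
    simp [v, sq_abs]
  rw [h2, h3] at h1
  simp_rw [h4] at h1
  exact h1
end

section
/- The rational-quadratic spline segment f(ξ) = y⁰ + Δy[δξ² + αξ(1-ξ)] / [δ + ρξ(1-ξ)] on ξ ∈ [0,1], where Δy > 0, δ > 0, α > 0, α' > 0 and ρ = α' + α - 2δ, has derivative df/dξ = Δy · (α'ξ² + 2δξ(1-ξ) + α(1-ξ)²) δ / [δ + ρξ(1-ξ)]² which is strictly positive for all ξ ∈ [0,1]; hence f is strictly monotonically increasing on [0,1]. -/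
theorem rq_spline_strict_mono
    (y0 Δy δ α α' : ℝ)
    (hΔy : 0 < Δy) (hδ : 0 < δ) (hα : 0 < α) (hα' : 0 < α')
    (ρ : ℝ) (hρ : ρ = α' + α - 2 * δ)
    (f : ℝ → ℝ)
    (hf : ∀ ξ : ℝ, f ξ = y0 + Δy * (δ * ξ ^ 2 + α * ξ * (1 - ξ)) / (δ + ρ * ξ * (1 - ξ))) :
    (∀ ξ ∈ Set.Icc (0:ℝ) 1,
        HasDerivAt f
          (Δy * (α' * ξ ^ 2 + 2 * δ * ξ * (1 - ξ) + α * (1 - ξ) ^ 2) * δ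
            / (δ + ρ * ξ * (1 - ξ)) ^ 2) ξ ∧
        0 < Δy * (α' * ξ ^ 2 + 2 * δ * ξ * (1 - ξ) + α * (1 - ξ) ^ 2) * δ
            / (δ + ρ * ξ * (1 - ξ)) ^ 2) ∧
      StrictMonoOn f (Set.Icc (0:ℝ) 1) := by
  have hD : ∀ ξ ∈ Set.Icc (0:ℝ) 1, 0 < δ + ρ * ξ * (1 - ξ) := by
    intro ξ ⟨h0, h1⟩
    subst hρ
    nlinarith [sq_nonneg (2 * ξ - 1),
      mul_nonneg (mul_nonneg (by linarith : (0:ℝ) ≤ α + α') h0)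
        (by linarith : (0:ℝ) ≤ 1 - ξ)]
  have hN : ∀ ξ ∈ Set.Icc (0:ℝ) 1,
      0 < α' * ξ ^ 2 + 2 * δ * ξ * (1 - ξ) + α * (1 - ξ) ^ 2 := by
    intro ξ ⟨h0, h1⟩
    nlinarith [sq_nonneg (α' * ξ - α * (1 - ξ)), mul_pos hα hα',
      mul_nonneg (mul_nonneg (by linarith : (0:ℝ) ≤ 2 * δ) h0)
        (by linarith : (0:ℝ) ≤ 1 - ξ)]
  have key : ∀ ξ ∈ Set.Icc (0:ℝ) 1,
      HasDerivAt f
        (Δy * (α' * ξ ^ 2 + 2 * δ * ξ * (1 - ξ) + α * (1 - ξ) ^ 2) * δ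
          / (δ + ρ * ξ * (1 - ξ)) ^ 2) ξ := by
    intro ξ hξ
    have hDξ := hD ξ hξ
    have hDne : δ + ρ * ξ * (1 - ξ) ≠ 0 := ne_of_gt hDξ
    have hx : HasDerivAt (fun x : ℝ => x * (1 - x)) (1 - 2 * ξ) ξ := by
      have := (hasDerivAt_id ξ).mul ((hasDerivAt_const ξ (1:ℝ)).sub (hasDerivAt_id ξ))
      refine this.congr_deriv ?_
      show 1 * (1 - ξ) + ξ * (0 - 1) = 1 - 2 * ξ; ring
    have hnum : HasDerivAt (fun x : ℝ => Δy * (δ * x ^ 2 + α * x * (1 - x)))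
        (Δy * (2 * δ * ξ + α * (1 - 2 * ξ))) ξ := by
      have h2 : HasDerivAt (fun x : ℝ => x ^ 2) (2 * ξ) ξ := by
        simpa using (hasDerivAt_pow 2 ξ)
      have := ((h2.const_mul δ).add (hx.const_mul α)).const_mul Δy
      rw [show (fun x : ℝ => Δy * (δ * x ^ 2 + α * x * (1 - x))) =
          fun x => Δy * (δ * x ^ 2 + α * (x * (1 - x))) from funext fun x => by ring]
      refine this.congr_deriv ?_
      ring
    have hden : HasDerivAt (fun x : ℝ => δ + ρ * x * (1 - x)) (ρ * (1 - 2 * ξ)) ξ := by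
      have hfun : (fun x : ℝ => δ + ρ * x * (1 - x)) = fun x => δ + ρ * (x * (1 - x)) := by
        funext x; ring
      rw [hfun]
      have h3 := (hasDerivAt_const ξ δ).add (hx.const_mul ρ)
      rw [zero_add] at h3
      exact h3
    have hdiv := hnum.div hden hDne
    have hfa : f = fun x : ℝ => y0 + Δy * (δ * x ^ 2 + α * x * (1 - x)) / (δ + ρ * x * (1 - x)) :=
      funext hf
    rw [hfa]
    have := (hasDerivAt_const ξ y0).add hdiv
    refine this.congr_deriv ?_
    subst hρ
    field_simp
    ring
  refine ⟨fun ξ hξ => ⟨key ξ hξ, ?_⟩, ?_⟩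
  · exact div_pos (mul_pos (mul_pos hΔy (hN ξ hξ)) hδ) (pow_pos (hD ξ hξ) 2)
  · have hcont : ContinuousOn f (Set.Icc (0:ℝ) 1) :=
      fun ξ hξ => ((key ξ hξ).continuousAt).continuousWithinAt
    apply strictMonoOn_of_hasDerivWithinAt_pos (convex_Icc (0:ℝ) 1) hcont
      (f' := fun ξ => Δy * (α' * ξ ^ 2 + 2 * δ * ξ * (1 - ξ) + α * (1 - ξ) ^ 2) * δ
          / (δ + ρ * ξ * (1 - ξ)) ^ 2)
    · intro ξ hξ
      have hξ' : ξ ∈ Set.Icc (0:ℝ) 1 := interior_subset hξ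
      exact (key ξ hξ').hasDerivWithinAt
    · intro ξ hξ
      have hξ' : ξ ∈ Set.Icc (0:ℝ) 1 := interior_subset hξ
      exact div_pos (mul_pos (mul_pos hΔy (hN ξ hξ')) hδ) (pow_pos (hD ξ hξ') 2)
end
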